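/- In a real inner product space, for fixed points x₁,…,xₙ in a ball of radius D, the weighted barycenter is Lipschitz in each mass: if mⱼ changes to mⱼ' (both positive, other masses fixed), then the barycenters c and c' satisfy dist(c, c') ≤ (2D * |mⱼ - mⱼ'|)/(∑_{i≠j} mᵢ + min(mⱼ, mⱼ')). -/

import Mathlib

theorem barycenter_lipschitz_in_mass
    {E : Type*} [NormedAddCommGroup E] [InnerProductSpace ℝ E]
    {n : ℕ} (x : Fin n → E) (z : E) (D : ℝ)
    (hx : ∀ i, x i ∈ Metric.closedBall z D)
    (m : Fin n → ℝ) (hm : ∀ i, 0 < m i) (j : Fin n) (t : ℝ) (ht : 0 < t) :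
    dist ((∑ i, m i)⁻¹ • ∑ i, m i • x i)
         ((∑ i, Function.update m j t i)⁻¹ • ∑ i, Function.update m j t i • x i)
      ≤ (2 * D * |m j - t|) / ((∑ i ∈ Finset.univ.erase j, m i) + min (m j) t) := by
  classical
  set m' := Function.update m j t with hm'def
  have hm' : ∀ i, 0 < m' i := by
    intro i
    rcases eq_or_ne i j with h | h
    · simp [hm'def, h, ht]
    · simp [hm'def, Function.update_of_ne h, hm i]
  set S := ∑ i, m i with hSdef
  set S' := ∑ i, m' i with hS'def
  set A := ∑ i, m i • x i with hAdef
  set A' := ∑ i, m' i • x i with hA'def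
  have hS : 0 < S := Finset.sum_pos (fun i _ => hm i) ⟨j, Finset.mem_univ j⟩
  have hS' : 0 < S' := Finset.sum_pos (fun i _ => hm' i) ⟨j, Finset.mem_univ j⟩
  have hErest : ∑ i ∈ Finset.univ.erase j, m' i = ∑ i ∈ Finset.univ.erase j, m i := by
    refine Finset.sum_congr rfl fun i hi => ?_
    rw [hm'def, Function.update_of_ne (Finset.mem_erase.1 hi).1]
  have hSsplit : m j + ∑ i ∈ Finset.univ.erase j, m i = S :=
    Finset.add_sum_erase _ _ (Finset.mem_univ j)
  have hS'split : t + ∑ i ∈ Finset.univ.erase j, m i = S' := by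
    have := Finset.add_sum_erase Finset.univ m' (Finset.mem_univ j)
    rw [hErest] at this
    simpa [hm'def] using this
  have hS'eq : S' = S + (t - m j) := by linarith
  have hArest : ∑ i ∈ Finset.univ.erase j, m' i • x i
      = ∑ i ∈ Finset.univ.erase j, m i • x i := by
    refine Finset.sum_congr rfl fun i hi => ?_
    rw [hm'def, Function.update_of_ne (Finset.mem_erase.1 hi).1]
  have hA'eq : A' = A + (t - m j) • x j := by
    have h1 : m j • x j + ∑ i ∈ Finset.univ.erase j, m i • x i = A :=
      Finset.add_sum_erase (M := E) Finset.univ (fun i => m i • x i) (Finset.mem_univ j)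
    have h2 : t • x j + ∑ i ∈ Finset.univ.erase j, m i • x i = A' := by
      have := Finset.add_sum_erase (M := E) Finset.univ (fun i => m' i • x i) (Finset.mem_univ j)
      rw [hArest] at this
      simpa [hm'def] using this
    rw [← h1, ← h2]
    module
  have hsum : ∑ i, m i • (x i - x j) = A - S • x j := by
    rw [hAdef, hSdef, Finset.sum_smul]
    simp [smul_sub, Finset.sum_sub_distrib]
  have key : S⁻¹ • A - S'⁻¹ • A'
      = ((S * S')⁻¹ * (t - m j)) • ∑ i, m i • (x i - x j) := by
    have e : (S * S') • (S⁻¹ • A - S'⁻¹ • A')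
        = (t - m j) • ∑ i, m i • (x i - x j) := by
      rw [smul_sub, smul_smul, smul_smul, hsum, hA'eq, hS'eq]
      have h1 : S * (S + (t - m j)) * S⁻¹ = S + (t - m j) := by
        field_simp
      have h2 : S * (S + (t - m j)) * (S + (t - m j))⁻¹ = S := by
        have : (S + (t - m j)) ≠ 0 := by rw [← hS'eq]; exact hS'.ne'
        field_simp
      rw [h1, h2]
      module
    calc S⁻¹ • A - S'⁻¹ • A'
        = (S * S')⁻¹ • ((S * S') • (S⁻¹ • A - S'⁻¹ • A')) := by
          rw [smul_smul, inv_mul_cancel₀ (by positivity : (S * S') ≠ 0), one_smul]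
      _ = (S * S')⁻¹ • ((t - m j) • ∑ i, m i • (x i - x j)) := by rw [e]
      _ = ((S * S')⁻¹ * (t - m j)) • ∑ i, m i • (x i - x j) := by rw [smul_smul]
  have hD : 0 ≤ D := le_trans dist_nonneg (by simpa [Metric.mem_closedBall] using hx j)
  have hxij : ∀ i, ‖x i - x j‖ ≤ 2 * D := by
    intro i
    have h1 : dist (x i) z ≤ D := by simpa [Metric.mem_closedBall] using hx i
    have h2 : dist (x j) z ≤ D := by simpa [Metric.mem_closedBall] using hx j
    calc ‖x i - x j‖ = dist (x i) (x j) := (dist_eq_norm _ _).symm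
      _ ≤ dist (x i) z + dist z (x j) := dist_triangle _ _ _
      _ ≤ D + D := add_le_add h1 (by rwa [dist_comm])
      _ = 2 * D := by ring
  have hnormsum : ‖∑ i, m i • (x i - x j)‖ ≤ 2 * D * S := by
    calc ‖∑ i, m i • (x i - x j)‖ ≤ ∑ i, ‖m i • (x i - x j)‖ :=
          norm_sum_le _ _
      _ = ∑ i, m i * ‖x i - x j‖ := by
          refine Finset.sum_congr rfl fun i _ => ?_
          rw [norm_smul, Real.norm_eq_abs, abs_of_pos (hm i)]
      _ ≤ ∑ i, m i * (2 * D) := by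
          refine Finset.sum_le_sum fun i _ => ?_
          exact mul_le_mul_of_nonneg_left (hxij i) (hm i).le
      _ = 2 * D * S := by rw [← Finset.sum_mul]; ring
  have hbound : dist (S⁻¹ • A) (S'⁻¹ • A') ≤ 2 * D * |m j - t| / S' := by
    rw [dist_eq_norm, key, norm_smul, Real.norm_eq_abs]
    have habs : |(S * S')⁻¹ * (t - m j)| = (S * S')⁻¹ * |m j - t| := by
      rw [abs_mul, abs_of_pos (by positivity : (0:ℝ) < (S * S')⁻¹), abs_sub_comm]
    rw [habs]
    calc (S * S')⁻¹ * |m j - t| * ‖∑ i, m i • (x i - x j)‖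
        ≤ (S * S')⁻¹ * |m j - t| * (2 * D * S) := by
          exact mul_le_mul_of_nonneg_left hnormsum (by positivity)
      _ = 2 * D * |m j - t| / S' := by
          field_simp
  refine le_trans hbound ?_
  have hden : (∑ i ∈ Finset.univ.erase j, m i) + min (m j) t ≤ S' := by
    have : min (m j) t ≤ t := min_le_right _ _
    linarith
  have hdenpos : 0 < (∑ i ∈ Finset.univ.erase j, m i) + min (m j) t := by
    have h1 : 0 ≤ ∑ i ∈ Finset.univ.erase j, m i :=
      Finset.sum_nonneg fun i _ => (hm i).le
    have h2 : 0 < min (m j) t := lt_min (hm j) ht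
    linarith
  exact div_le_div_of_nonneg_left (by positivity) hdenpos hden
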